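/- Let p, q, r, s, ω be real numbers with q ≠ 0, s ≠ 0, ω ≠ 0, and define u(ξ) = −(3r²/(25qsω)) [1 − tanh(rξ/(10sω))]² − (25sω² + 25psω − 6r²)/(25qsω). Then u satisfies the traveling-wave RLW–Burgers ODE (ω + p) u' + q u u' + r u'' + ω s u''' = 0 for all ξ ∈ ℝ. -/

import Mathlib

lemma tanh_hasDerivAt (x : ℝ) : HasDerivAt Real.tanh (1 - Real.tanh x ^ 2) x := by
  have hc : Real.cosh x ≠ 0 := (Real.cosh_pos x).ne'
  have h := (Real.hasDerivAt_sinh x).div (Real.hasDerivAt_cosh x) hc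
  have heq : (fun y => Real.sinh y / Real.cosh y) = Real.tanh := by
    funext y; rw [Real.tanh_eq_sinh_div_cosh]
  rw [show (Real.sinh / Real.cosh) = fun y => Real.sinh y / Real.cosh y from rfl, heq] at h
  refine h.congr_deriv ?_
  rw [Real.tanh_eq_sinh_div_cosh]
  field_simp

lemma poly4_hasDerivAt (c a0 a1 a2 a3 a4 x : ℝ) :
    HasDerivAt (fun y => a0 + a1 * Real.tanh (c * y) + a2 * Real.tanh (c * y) ^ 2
        + a3 * Real.tanh (c * y) ^ 3 + a4 * Real.tanh (c * y) ^ 4)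
      ((a1 + 2 * a2 * Real.tanh (c * x) + 3 * a3 * Real.tanh (c * x) ^ 2
        + 4 * a4 * Real.tanh (c * x) ^ 3) * (c - c * Real.tanh (c * x) ^ 2)) x := by
  have hT : HasDerivAt (fun y => Real.tanh (c * y)) (c - c * Real.tanh (c * x) ^ 2) x := by
    have := (tanh_hasDerivAt (c * x)).comp x ((hasDerivAt_id x).const_mul c)
    refine this.congr_deriv ?_
    ring
  have h := (((hasDerivAt_const x a0).add (hT.const_mul a1)).add
      ((hT.pow 2).const_mul a2)).add ((hT.pow 3).const_mul a3) |>.add ((hT.pow 4).const_mul a4)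
  refine h.congr_deriv ?_
  ring

set_option maxHeartbeats 2000000 in
theorem rlw_burgers_tanh_solution
    (p q r s omega : ℝ) (hq : q ≠ 0) (hs : s ≠ 0) (homega : omega ≠ 0)
    (u : ℝ → ℝ)
    (hu : ∀ ξ, u ξ =
      -(3 * r ^ 2 / (25 * q * s * omega)) *
          (1 - Real.tanh (r * ξ / (10 * s * omega))) ^ 2
        - (25 * s * omega ^ 2 + 25 * p * s * omega - 6 * r ^ 2)
            / (25 * q * s * omega))
    (ξ : ℝ) :
    (omega + p) * deriv u ξ + q * u ξ * deriv u ξ + r * deriv (deriv u) ξ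
      + omega * s * deriv (deriv (deriv u)) ξ = 0 := by
  set c : ℝ := r / (10 * s * omega) with hc
  set A : ℝ := -(3 * r ^ 2 / (25 * q * s * omega)) with hA
  set B : ℝ := -((25 * s * omega ^ 2 + 25 * p * s * omega - 6 * r ^ 2)
            / (25 * q * s * omega)) with hB
  have hueq : u = fun y => (A + B) + (-2 * A) * Real.tanh (c * y)
      + A * Real.tanh (c * y) ^ 2 + 0 * Real.tanh (c * y) ^ 3
      + 0 * Real.tanh (c * y) ^ 4 := by
    funext y
    rw [hu y]
    have : r * y / (10 * s * omega) = c * y := by rw [hc]; ring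
    rw [this]
    ring
  -- first derivative
  have hD1 : deriv u = fun y => (-2 * A * c) + (2 * A * c) * Real.tanh (c * y)
      + (2 * A * c) * Real.tanh (c * y) ^ 2 + (-2 * A * c) * Real.tanh (c * y) ^ 3
      + 0 * Real.tanh (c * y) ^ 4 := by
    funext y
    rw [hueq]
    rw [(poly4_hasDerivAt c (A + B) (-2 * A) A 0 0 y).deriv]
    ring
  have hD2 : deriv (deriv u) = fun y => (2 * A * c ^ 2) + (4 * A * c ^ 2) * Real.tanh (c * y)
      + (-8 * A * c ^ 2) * Real.tanh (c * y) ^ 2 + (-4 * A * c ^ 2) * Real.tanh (c * y) ^ 3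
      + (6 * A * c ^ 2) * Real.tanh (c * y) ^ 4 := by
    funext y
    rw [hD1]
    rw [(poly4_hasDerivAt c (-2 * A * c) (2 * A * c) (2 * A * c) (-2 * A * c) 0 y).deriv]
    ring
  have hD3 : deriv (deriv (deriv u)) ξ =
      (4 * A * c ^ 2 + 2 * (-8 * A * c ^ 2) * Real.tanh (c * ξ)
        + 3 * (-4 * A * c ^ 2) * Real.tanh (c * ξ) ^ 2
        + 4 * (6 * A * c ^ 2) * Real.tanh (c * ξ) ^ 3) * (c - c * Real.tanh (c * ξ) ^ 2) := by
    rw [hD2]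
    exact (poly4_hasDerivAt c (2 * A * c ^ 2) (4 * A * c ^ 2) (-8 * A * c ^ 2)
      (-4 * A * c ^ 2) (6 * A * c ^ 2) ξ).deriv
  rw [hD3, hD2, hD1, hueq]
  simp only
  set t : ℝ := Real.tanh (c * ξ)
  rw [hA, hB, hc]
  field_simp
  ring
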